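/- If G is a graph whose domination polynomial equals that of a cycle, i.e., D(G,x) = D(C_n,x) with n ≥ 4, and G is a disjoint union of cycles C_{n_1}, ..., C_{n_k}, then k is odd. -/

import Mathlib

open Polynomial SimpleGraph

/-- `S` is a dominating set of `G`: every vertex is in `S` or adjacent to a vertex of `S`. -/
def IsDomSet {V : Type*} (G : SimpleGraph V) (S : Finset V) : Prop :=
  ∀ v : V, v ∈ S ∨ ∃ u ∈ S, G.Adj u v

/-- The domination polynomial `D(G,x) = ∑ d(G,i) xⁱ`. -/
noncomputable def domPoly {V : Type*} [Fintype V] (G : SimpleGraph V) : Polynomial ℤ :=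
  ∑ i ∈ Finset.range (Fintype.card V + 1),
    (Nat.card {S : Finset V // IsDomSet G S ∧ S.card = i} : ℤ) • (X : Polynomial ℤ) ^ i

/-- The disjoint union of a family of graphs. -/
def sigmaGraph {ι : Type*} {V : ι → Type*} (G : ∀ i, SimpleGraph (V i)) :
    SimpleGraph (Σ i, V i) where
  Adj x y := ∃ (i : ι) (u v : V i), (G i).Adj u v ∧ x = ⟨i, u⟩ ∧ y = ⟨i, v⟩
  symm := by
    constructor
    rintro x y ⟨i, u, v, h, rfl, rfl⟩
    exact ⟨i, v, u, h.symm, rfl, rfl⟩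
  loopless := by
    constructor
    rintro x ⟨i, u, v, h, rfl, heq⟩
    cases heq
    exact h.ne rfl

open Finset
open scoped Fin.NatCast Fin.CommRing

open Classical in
noncomputable def signedSum {V : Type*} [Fintype V] (G : SimpleGraph V) : ℤ :=
  ∑ S ∈ Finset.univ.filter (fun S : Finset V => IsDomSet G S), (-1 : ℤ)^S.card

open Classical in
lemma domPoly_eval_neg_one {V : Type*} [Fintype V] (G : SimpleGraph V) :
    (domPoly G).eval (-1) = signedSum G := by
  classical
  have h1 : (domPoly G).eval (-1)
      = ∑ i ∈ Finset.range (Fintype.card V + 1),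
        ((Finset.univ.filter (fun S : Finset V => IsDomSet G S ∧ S.card = i)).card : ℤ) * (-1)^i := by
    simp only [domPoly, eval_finset_sum, eval_smul, eval_pow, eval_X, zsmul_eq_mul]
    refine Finset.sum_congr rfl fun i _ => ?_
    simp only [eval_mul, eval_pow, eval_X, eval_intCast, eval_natCast]
    congr 2
    · push_cast
      congr 1
      rw [Nat.card_eq_fintype_card, Fintype.card_subtype]
  rw [h1, signedSum]
  rw [← Finset.sum_fiberwise_of_maps_to (g := fun S : Finset V => S.card)
    (fun S hS => Finset.mem_range.mpr (Nat.lt_succ_of_le (Finset.card_le_univ S)))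
    (f := fun S => (-1 : ℤ)^S.card)]
  refine Finset.sum_congr rfl fun i _ => ?_
  rw [Finset.sum_congr rfl (fun S hS => by
    rw [(Finset.mem_filter.mp hS).2]), Finset.sum_const, nsmul_eq_mul]
  congr 2
  rw [Finset.filter_filter]

lemma isDomSet_map {V W : Type*} {G : SimpleGraph V} {H : SimpleGraph W} (e : G ≃g H)
    {S : Finset V} (h : IsDomSet G S) : IsDomSet H (S.map e.toEquiv.toEmbedding) := by
  intro w
  rcases h (e.symm w) with hv | ⟨u, hu, hadj⟩
  · left
    refine Finset.mem_map.mpr ⟨e.symm w, hv, ?_⟩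
    simp
  · right
    refine ⟨e u, Finset.mem_map.mpr ⟨u, hu, rfl⟩, ?_⟩
    have := e.map_adj_iff (v := u) (w := e.symm w)
    rw [RelIso.apply_symm_apply] at this
    exact this.mpr hadj

lemma signedSum_iso {V W : Type*} [Fintype V] [Fintype W] {G : SimpleGraph V}
    {H : SimpleGraph W} (e : G ≃g H) : signedSum G = signedSum H := by
  classical
  unfold signedSum
  refine Finset.sum_bij' (fun S _ => S.map e.toEquiv.toEmbedding)
    (fun T _ => T.map e.symm.toEquiv.toEmbedding) ?_ ?_ ?_ ?_ ?_
  · intro S hS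
    simp only [Finset.mem_filter, Finset.mem_univ, true_and] at hS ⊢
    exact isDomSet_map e hS
  · intro T hT
    simp only [Finset.mem_filter, Finset.mem_univ, true_and] at hT ⊢
    exact isDomSet_map e.symm hT
  · intro S _
    ext v
    simp only [Finset.mem_map, Equiv.coe_toEmbedding]
    constructor
    · rintro ⟨w, ⟨u, hu, rfl⟩, rfl⟩
      rwa [show e.symm.toEquiv (e.toEquiv u) = u from e.toEquiv.symm_apply_apply u]
    · intro hv
      exact ⟨e.toEquiv v, ⟨v, hv, rfl⟩, e.toEquiv.symm_apply_apply v⟩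
  · intro T _
    ext w
    simp only [Finset.mem_map, Equiv.coe_toEmbedding]
    constructor
    · rintro ⟨x, ⟨u, hu, rfl⟩, rfl⟩
      rwa [show e.toEquiv (e.symm.toEquiv u) = u from e.toEquiv.apply_symm_apply u]
    · intro hw
      exact ⟨e.symm.toEquiv w, ⟨w, hw, rfl⟩, e.toEquiv.apply_symm_apply w⟩
  · intro S _
    simp

lemma isDomSet_sigma_iff {ι : Type*} [Fintype ι] [DecidableEq ι] {V : ι → Type*}
    (G : ∀ i, SimpleGraph (V i)) (f : ∀ i, Finset (V i)) :
    IsDomSet (sigmaGraph G) ((Finset.univ : Finset ι).sigma f) ↔ ∀ i, IsDomSet (G i) (f i) := by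
  constructor
  · intro h i v
    rcases h ⟨i, v⟩ with hv | ⟨u, hu, j, a, b, hadj, h1, h2⟩
    · left; simpa using hv
    · cases h2
      cases h1
      right
      exact ⟨a, by simpa using hu, hadj⟩
  · intro h ⟨i, v⟩
    rcases h i v with hv | ⟨u, hu, hadj⟩
    · left; simpa using hv
    · right
      exact ⟨⟨i, u⟩, by simpa using hu, ⟨i, u, v, hadj, rfl, rfl⟩⟩

open Classical in
lemma signedSum_sigma {ι : Type*} [Fintype ι] {V : ι → Type*} [∀ i, Fintype (V i)]
    (G : ∀ i, SimpleGraph (V i)) :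
    signedSum (sigmaGraph G) = ∏ i, signedSum (G i) := by
  classical
  unfold signedSum
  rw [Finset.prod_univ_sum]
  refine (Finset.sum_bij' (g := fun f => ∏ i, (-1:ℤ)^(f i).card)
    (f := fun T : Finset (Σ i, V i) => (-1:ℤ)^T.card)
    (fun T _ => fun i => T.preimage (Sigma.mk i) sigma_mk_injective.injOn)
    (fun f _ => (Finset.univ : Finset ι).sigma f) ?_ ?_ ?_ ?_ ?_)
  · -- membership forward
    intro T hT
    simp only [Finset.mem_filter, Finset.mem_univ, true_and] at hT
    rw [Fintype.mem_piFinset]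
    intro i
    simp only [Finset.mem_filter, Finset.mem_univ, true_and]
    have := (isDomSet_sigma_iff G (fun i => T.preimage (Sigma.mk i) sigma_mk_injective.injOn)).mp ?_ i
    · exact this
    · rwa [Finset.sigma_preimage_mk_of_subset T (Finset.subset_univ _)]
  · -- membership backward
    intro f hf
    simp only [Finset.mem_filter, Finset.mem_univ, true_and]
    rw [Fintype.mem_piFinset] at hf
    refine (isDomSet_sigma_iff G f).mpr fun i => ?_
    have := hf i
    simpa using this
  · -- left inverse
    intro T _
    exact Finset.sigma_preimage_mk_of_subset T (Finset.subset_univ _)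
  · -- right inverse
    intro f _
    funext i
    ext v
    simp
  · -- values
    intro T _
    simp only
    rw [Finset.prod_pow_eq_pow_sum]
    congr 1
    rw [← Finset.card_sigma, Finset.sigma_preimage_mk_of_subset T (Finset.subset_univ _)]

abbrev St := Bool × Bool
def sgn (c : Bool) : ℤ := if c then -1 else 1

def finSt : St → List Bool → St
  | s, [] => s
  | s, c :: l => finSt (s.2, c) l

def okL : St → List Bool → Prop
  | _, [] => True
  | s, c :: l => ¬(s.1 = false ∧ s.2 = false ∧ c = false) ∧ okL (s.2, c) l

instance instDecOkL : ∀ (s : St) (l : List Bool), Decidable (okL s l)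
  | _, [] => .isTrue trivial
  | s, c :: l => by
      unfold okL
      exact instDecidableAnd (dq := instDecOkL (s.2, c) l)

def wtL : List Bool → ℤ
  | [] => 1
  | c :: l => sgn c * wtL l

lemma finSt_eq : ∀ (l : List Bool) (a b : Bool),
    finSt (a, b) l = ((a :: b :: l).getD l.length true, (a :: b :: l).getD (l.length + 1) true) := by
  intro l
  induction l with
  | nil => intro a b; rfl
  | cons c l ih =>
    intro a b
    show finSt (b, c) l = _
    rw [ih b c]
    rfl

lemma okL_iff : ∀ (l : List Bool) (a b : Bool),
    okL (a, b) l ↔ ∀ j < l.length, ¬((a :: b :: l).getD j true = false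
      ∧ (a :: b :: l).getD (j+1) true = false ∧ (a :: b :: l).getD (j+2) true = false) := by
  intro l
  induction l with
  | nil => intro a b; simp [okL]
  | cons c l ih =>
    intro a b
    show (¬(a = false ∧ b = false ∧ c = false) ∧ okL (b, c) l) ↔ _
    rw [ih b c]
    constructor
    · rintro ⟨h0, hr⟩ j hj
      match j with
      | 0 => exact h0
      | (j'+1) => exact hr j' (by simpa using hj)
    · intro h
      refine ⟨h 0 (by simp), fun j hj => h (j+1) (by simpa using hj)⟩

lemma wtL_ofFn : ∀ (n : ℕ) (u : Fin n → Bool), wtL (List.ofFn u) = ∏ i, sgn (u i) := by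
  intro n
  induction n with
  | zero => intro u; simp [wtL]
  | succ n ih =>
    intro u
    rw [List.ofFn_succ]
    show sgn (u 0) * wtL (List.ofFn fun i => u i.succ) = _
    rw [ih, Fin.prod_univ_succ]

lemma fin_cast_sub_two (k : ℕ) (j : ℕ) (hj : j < k + 2) :
    ((j + 2 : ℕ) : Fin (k+2)) - 2 = ⟨j, hj⟩ := by
  have h2 : ((j + 2 : ℕ) : Fin (k+2)) = (j : Fin (k+2)) + 2 := by push_cast; ring
  rw [h2, add_sub_cancel_right]
  ext
  simp [Fin.val_cast_of_lt hj]

lemma key (k : ℕ) (u : Fin (k+2) → Bool) (j : ℕ) (hj : j ≤ k + 3) :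
    (u (0-2) :: u (0-1) :: List.ofFn u).getD j true = u ((j : Fin (k+2)) - 2) := by
  match j with
  | 0 => simp
  | 1 =>
    show u (0 - 1) = u ((1 : Fin (k+2)) - 2)
    congr 1
    ring
  | (j'+2) =>
    have hj' : j' < k + 2 := by omega
    show (List.ofFn u).getD j' true = _
    rw [List.getD_eq_getElem _ _ (by simp; omega), List.getElem_ofFn,
      fin_cast_sub_two k j' hj']

def pathSum : ℕ → St → St → ℤ
  | 0, s, t => if s = t then 1 else 0
  | (n+1), s, t => ∑ c : Bool,
      if s.1 = false ∧ s.2 = false ∧ c = false then 0 else sgn c * pathSum n (s.2, c) t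

def closedSum (m : ℕ) : ℤ := ∑ s : St, pathSum m s s

abbrev cycOK {m : ℕ} (u : Fin (m+1) → Bool) : Prop :=
  ∀ i : Fin (m+1), ¬(u (i-2) = false ∧ u (i-1) = false ∧ u i = false)

lemma okL_t0 (k : ℕ) (u : Fin (k+2) → Bool) :
    okL (u (0-2), u (0-1)) (List.ofFn u) ↔ cycOK u := by
  rw [okL_iff]
  simp only [List.length_ofFn]
  constructor
  · intro h i
    have hi := h i.val i.isLt
    rw [key k u i.val (by omega), key k u (i.val+1) (by omega),
      key k u (i.val+2) (by omega)] at hi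
    have e0 : ((i.val : ℕ) : Fin (k+2)) = i := Fin.cast_val_eq_self i
    have e1 : ((i.val + 1 : ℕ) : Fin (k+2)) - 2 = i - 1 := by push_cast [e0]; ring
    have e2 : ((i.val + 2 : ℕ) : Fin (k+2)) - 2 = i := by push_cast [e0]; ring
    rw [e0, e1, e2] at hi
    exact hi
  · intro h j hj
    rw [key k u j (by omega), key k u (j+1) (by omega), key k u (j+2) (by omega)]
    have e1 : ((j + 1 : ℕ) : Fin (k+2)) - 2 = (j : Fin (k+2)) - 1 := by push_cast; ring
    have e2 : ((j + 2 : ℕ) : Fin (k+2)) - 2 = (j : Fin (k+2)) := by push_cast; ring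
    rw [e1, e2]
    exact h _

lemma finSt_t0 (k : ℕ) (u : Fin (k+2) → Bool) :
    finSt (u (0-2), u (0-1)) (List.ofFn u) = (u (0-2), u (0-1)) := by
  rw [finSt_eq, List.length_ofFn, key k u (k+2) (by omega), key k u (k+3) (by omega)]
  have e1 : ((k+2 : ℕ) : Fin (k+2)) = 0 := by
    exact_mod_cast Fin.natCast_self (k+2)
  have e2 : ((k+3 : ℕ) : Fin (k+2)) = 1 := by
    have : ((k+3 : ℕ) : Fin (k+2)) = ((k+2 : ℕ) : Fin (k+2)) + 1 := by push_cast; ring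
    rw [this, e1, zero_add]
  rw [e1, e2]
  have : (1 : Fin (k+2)) - 2 = 0 - 1 := by ring
  rw [this]

lemma fin_zero_sub_two (k : ℕ) : (0 : Fin (k+2)) - 2 = ⟨k, by omega⟩ := by
  have h := fin_cast_sub_two k k (by omega)
  have e1 : ((k+2 : ℕ) : Fin (k+2)) = 0 := by exact_mod_cast Fin.natCast_self (k+2)
  rwa [e1] at h

lemma fin_zero_sub_one (k : ℕ) : (0 : Fin (k+2)) - 1 = ⟨k+1, by omega⟩ := by
  have h := fin_cast_sub_two k (k+1) (by omega)
  have e2 : ((k+3 : ℕ) : Fin (k+2)) = 1 := by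
    have : ((k+3 : ℕ) : Fin (k+2)) = ((k+2 : ℕ) : Fin (k+2)) + 1 := by push_cast; ring
    rw [this]
    rw [show ((k+2 : ℕ) : Fin (k+2)) = 0 from by exact_mod_cast Fin.natCast_self (k+2), zero_add]
  rw [show (k + 1 + 2 : ℕ) = k + 3 from by omega, e2] at h
  rw [← h]
  ring

lemma finSt_unique (k : ℕ) (u : Fin (k+2) → Bool) (a b : Bool)
    (h : finSt (a, b) (List.ofFn u) = (a, b)) : (a, b) = (u (0-2), u (0-1)) := by
  rw [finSt_eq, List.length_ofFn] at h
  have g1 : (a :: b :: List.ofFn u).getD (k+2) true = u ⟨k, by omega⟩ := by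
    show (List.ofFn u).getD k true = _
    rw [List.getD_eq_getElem _ _ (by rw [List.length_ofFn]; omega), List.getElem_ofFn]
  have g2 : (a :: b :: List.ofFn u).getD (k+2+1) true = u ⟨k+1, by omega⟩ := by
    show (List.ofFn u).getD (k+1) true = _
    rw [List.getD_eq_getElem _ _ (by rw [List.length_ofFn]; omega), List.getElem_ofFn]
  rw [g1, g2] at h
  rw [fin_zero_sub_two, fin_zero_sub_one, ← h]

lemma pathSum_eq_sum (n : ℕ) : ∀ s t : St, pathSum n s t =
    ∑ u : Fin n → Bool, if okL s (List.ofFn u) ∧ finSt s (List.ofFn u) = t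
      then wtL (List.ofFn u) else 0 := by
  induction n with
  | zero =>
    intro s t
    rw [Finset.sum_eq_single (fun i => false)]
    · simp only [List.ofFn_zero, okL, finSt, wtL, true_and]
      show (if s = t then (1:ℤ) else 0) = if s = t then 1 else 0
      rfl
    · intro u _ hu
      exact absurd (_root_.funext fun i => Fin.elim0 i) hu
    · exact fun h => absurd (Finset.mem_univ _) h
  | succ n ih =>
    intro s t
    show (∑ c : Bool, if s.1 = false ∧ s.2 = false ∧ c = false then 0
        else sgn c * pathSum n (s.2, c) t) = _
    rw [← (Fin.consEquiv (fun _ : Fin (n+1) => Bool)).sum_comp]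
    rw [Fintype.sum_prod_type]
    refine Finset.sum_congr rfl fun c _ => ?_
    have hofn : ∀ u : Fin n → Bool,
        List.ofFn (Fin.consEquiv (fun _ => Bool) (c, u)) = c :: List.ofFn u := by
      intro u
      rw [List.ofFn_succ]
      congr 1
    by_cases hbad : s.1 = false ∧ s.2 = false ∧ c = false
    · rw [if_pos hbad]
      symm
      refine Finset.sum_eq_zero fun u _ => ?_
      rw [hofn u, if_neg]
      rintro ⟨⟨hok1, -⟩, -⟩
      exact hok1 hbad
    · rw [if_neg hbad, ih (s.2, c) t, Finset.mul_sum]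
      refine Finset.sum_congr rfl fun u _ => ?_
      rw [hofn u]
      show sgn c * (if okL (s.2,c) (List.ofFn u) ∧ finSt (s.2,c) (List.ofFn u) = t
          then wtL (List.ofFn u) else 0)
        = if (¬(s.1 = false ∧ s.2 = false ∧ c = false) ∧ okL (s.2,c) (List.ofFn u))
            ∧ finSt (s.2,c) (List.ofFn u) = t then sgn c * wtL (List.ofFn u) else 0
      by_cases h : okL (s.2,c) (List.ofFn u) ∧ finSt (s.2,c) (List.ofFn u) = t
      · rw [if_pos h, if_pos ⟨⟨hbad, h.1⟩, h.2⟩]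
      · rw [if_neg h, if_neg, mul_zero]
        rintro ⟨⟨-, hok⟩, hfin⟩
        exact h ⟨hok, hfin⟩


lemma closedSum_eq_cyc (k : ℕ) :
    closedSum (k+2) = ∑ u : Fin (k+2) → Bool, if cycOK u then ∏ i, sgn (u i) else 0 := by
  unfold closedSum
  simp only [pathSum_eq_sum]
  rw [Finset.sum_comm]
  refine Finset.sum_congr rfl fun u _ => ?_
  rw [Finset.sum_eq_single ((u (0-2), u (0-1)) : St)]
  · rw [finSt_t0]
    by_cases h : cycOK u
    · rw [if_pos ⟨(okL_t0 k u).mpr h, rfl⟩, if_pos h, wtL_ofFn]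
    · rw [if_neg, if_neg h]
      rintro ⟨hok, -⟩
      exact h ((okL_t0 k u).mp hok)
  · rintro ⟨a, b⟩ - hne
    rw [if_neg]
    rintro ⟨-, hfin⟩
    exact hne (finSt_unique k u a b hfin)
  · intro h
    exact absurd (Finset.mem_univ _) h

lemma closedSum_eq_cyc_one :
    closedSum 1 = ∑ u : Fin 1 → Bool, if cycOK u then ∏ i, sgn (u i) else 0 := by decide

lemma pathSum_add (a b : ℕ) : ∀ s t : St, pathSum (a + b) s t
    = ∑ u : St, pathSum a s u * pathSum b u t := by
  induction a with
  | zero =>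
    intro s t
    simp only [Nat.zero_add, pathSum]
    rw [Finset.sum_eq_single s]
    · simp
    · intro u _ hu; simp [Ne.symm hu]
    · simp
  | succ a ih =>
    intro s t
    have : a + 1 + b = (a + b) + 1 := by omega
    rw [this]
    show (∑ c : Bool, if s.1 = false ∧ s.2 = false ∧ c = false then 0
        else sgn c * pathSum (a+b) (s.2, c) t) = _
    have h2 : ∀ u : St, pathSum (a+1) s u = ∑ c : Bool,
        (if s.1 = false ∧ s.2 = false ∧ c = false then 0 else sgn c * pathSum a (s.2, c) u) := by
      intro u; rfl
    simp only [h2, Finset.sum_mul, ih]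
    rw [Finset.sum_comm]
    refine Finset.sum_congr rfl fun c _ => ?_
    by_cases hbad : s.1 = false ∧ s.2 = false ∧ c = false
    · simp [hbad]
    · simp only [if_neg hbad, Finset.mul_sum, mul_assoc]

lemma pathSum_step4 : ∀ u t : St,
    pathSum 4 u t + pathSum 3 u t + pathSum 2 u t + pathSum 1 u t = 0 := by decide

lemma pathSum_rec (n : ℕ) (s t : St) : pathSum (n+4) s t
    = -(pathSum (n+3) s t + pathSum (n+2) s t + pathSum (n+1) s t) := by
  have h4 := pathSum_add n 4 s t
  have h3 := pathSum_add n 3 s t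
  have h2 := pathSum_add n 2 s t
  have h1 := pathSum_add n 1 s t
  rw [h4, h3, h2, h1, ← Finset.sum_add_distrib, ← Finset.sum_add_distrib]
  rw [eq_neg_iff_add_eq_zero, ← Finset.sum_add_distrib]
  rw [← Finset.sum_const_zero (s := (Finset.univ : Finset St))]
  refine Finset.sum_congr rfl fun u _ => ?_
  have h := pathSum_step4 u t
  calc pathSum n s u * pathSum 4 u t + (pathSum n s u * pathSum 3 u t
        + pathSum n s u * pathSum 2 u t + pathSum n s u * pathSum 1 u t)
      = pathSum n s u * (pathSum 4 u t + pathSum 3 u t + pathSum 2 u t + pathSum 1 u t) := by ring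
    _ = 0 := by rw [h, mul_zero]

lemma closedSum_rec (n : ℕ) : closedSum (n+4)
    = -(closedSum (n+3) + closedSum (n+2) + closedSum (n+1)) := by
  simp only [closedSum, pathSum_rec, ← Finset.sum_add_distrib, ← Finset.sum_neg_distrib]

lemma closedSum_mod (m : ℕ) (hm : 1 ≤ m) : closedSum m % 4 = 3 := by
  induction m using Nat.strong_induction_on with
  | _ m ih =>
    match m, hm with
    | 1, _ => decide
    | 2, _ => decide
    | 3, _ => decide
    | (j+4), _ =>
      have h1 := ih (j+1) (by omega) (by omega)
      have h2 := ih (j+2) (by omega) (by omega)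
      have h3 := ih (j+3) (by omega) (by omega)
      rw [closedSum_rec]
      omega


def cycSum (m : ℕ) : ℤ := ∑ u : Fin (m+1) → Bool, if cycOK u then ∏ i, sgn (u i) else 0

lemma cycSum_mod (m : ℕ) : cycSum m % 4 = 3 := by
  have h : cycSum m = closedSum (m+1) := by
    match m with
    | 0 => exact closedSum_eq_cyc_one.symm
    | (j+1) => exact (closedSum_eq_cyc j).symm
  rw [h]
  exact closedSum_mod (m+1) (by omega)

lemma isDom_cycle_iff (m : ℕ) (S : Finset (Fin (m+1))) :
    IsDomSet (cycleGraph (m+1)) S ↔ ∀ v, v - 1 ∈ S ∨ v ∈ S ∨ v + 1 ∈ S := by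
  match m with
  | 0 =>
    have huniq : ∀ v w : Fin (0+1), v = w := fun v w => Fin.ext (by omega)
    constructor
    · intro h v
      right; left
      rcases h v with hv | ⟨u, hu, -⟩
      · exact hv
      · rw [huniq v u]; exact hu
    · intro h v
      left
      rcases h v with hv | hv | hv
      · rw [huniq v (v-1)]; exact hv
      · exact hv
      · rw [huniq v (v+1)]; exact hv
  | (k+1) =>
    have hadj : ∀ u v : Fin (k+2), (cycleGraph (k+2)).Adj u v ↔ u = v + 1 ∨ u = v - 1 := by
      intro u v
      rw [cycleGraph_adj]
      constructor
      · rintro (h | h)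
        · left; rw [← h]; ring
        · right; rw [← h]; ring
      · rintro (rfl | rfl)
        · left; ring
        · right; ring
    constructor
    · intro h v
      rcases h v with hv | ⟨u, hu, hu2⟩
      · right; left; exact hv
      · rcases (hadj u v).mp hu2 with rfl | rfl
        · right; right; exact hu
        · left; exact hu
    · intro h v
      rcases h v with hv | hv | hv
      · right; exact ⟨v - 1, hv, (hadj _ _).mpr (Or.inr rfl)⟩
      · left; exact hv
      · right; exact ⟨v + 1, hv, (hadj _ _).mpr (Or.inl rfl)⟩

lemma indicator_cycOK (m : ℕ) (S : Finset (Fin (m+1))) :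
    cycOK (fun i => decide (i ∈ S)) ↔ ∀ v : Fin (m+1), v - 1 ∈ S ∨ v ∈ S ∨ v + 1 ∈ S := by
  constructor
  · intro h v
    have := h (v + 1)
    simp only [decide_eq_false_iff_not] at this
    have e1 : v + 1 - 2 = v - 1 := by ring
    have e2 : v + 1 - 1 = v := by ring
    rw [e1, e2] at this
    by_contra hc
    push_neg at hc
    exact this ⟨hc.1, hc.2.1, hc.2.2⟩
  · intro h i
    simp only [decide_eq_false_iff_not]
    rintro ⟨h1, h2, h3⟩
    have := h (i - 1)
    have e1 : i - 1 - 1 = i - 2 := by ring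
    have e2 : i - 1 + 1 = i := by ring
    rw [e1, e2] at this
    tauto

lemma prod_sgn (m : ℕ) (S : Finset (Fin (m+1))) :
    (∏ i, sgn (decide (i ∈ S))) = (-1 : ℤ)^S.card := by
  classical
  rw [← Finset.prod_filter_mul_prod_filter_not Finset.univ (fun i => i ∈ S)]
  have h1 : ∀ i ∈ Finset.univ.filter (fun i => i ∈ S), sgn (decide (i ∈ S)) = -1 := by
    intro i hi
    simp only [Finset.mem_filter] at hi
    simp [sgn, hi.2]
  have h2 : ∀ i ∈ Finset.univ.filter (fun i => ¬(i ∈ S)), sgn (decide (i ∈ S)) = 1 := by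
    intro i hi
    simp only [Finset.mem_filter] at hi
    simp [sgn, hi.2]
  rw [Finset.prod_congr rfl h1, Finset.prod_congr rfl h2, Finset.prod_const, Finset.prod_const,
    one_pow, mul_one]
  congr 1
  rw [Finset.filter_univ_mem]

lemma signedSum_cycle (m : ℕ) : signedSum (cycleGraph (m+1)) = cycSum m := by
  classical
  unfold signedSum cycSum
  rw [← Finset.sum_filter]
  refine Finset.sum_bij' (fun S _ => fun i => decide (i ∈ S))
    (fun u _ => Finset.univ.filter (fun i => u i = true)) ?_ ?_ ?_ ?_ ?_
  · intro S hS
    simp only [Finset.mem_filter, Finset.mem_univ, true_and] at hS ⊢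
    exact (indicator_cycOK m S).mpr ((isDom_cycle_iff m S).mp hS)
  · intro u hu
    simp only [Finset.mem_filter, Finset.mem_univ, true_and] at hu ⊢
    rw [isDom_cycle_iff]
    rw [← indicator_cycOK]
    have : (fun i => decide (i ∈ Finset.univ.filter (fun i => u i = true))) = u := by
      funext i
      simp
    rwa [this]
  · intro S _
    ext i
    simp
  · intro u _
    funext i
    simp
  · intro S _
    rw [prod_sgn]

lemma int_mod_cast (x : ℤ) (hx : x % 4 = 3) : (x : ZMod 4) = 3 := by
  have h : x = 4 * (x / 4) + 3 := by omega
  calc (x : ZMod 4) = ((4 * (x / 4) + 3 : ℤ) : ZMod 4) := by rw [← h]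
    _ = 4 * ((x / 4 : ℤ) : ZMod 4) + 3 := by push_cast; ring
    _ = 3 := by rw [show (4 : ZMod 4) = 0 from rfl]; ring

theorem odd_number_of_cycles (n : ℕ) (hn : 4 ≤ n) (k : ℕ) (ns : Fin k → ℕ)
    (hpos : ∀ i, 0 < ns i) (V : Type) [Fintype V] (G : SimpleGraph V)
    (hG : Nonempty (G ≃g sigmaGraph (fun i => cycleGraph (ns i))))
    (hD : domPoly G = domPoly (cycleGraph n)) :
    Odd k := by
  classical
  obtain ⟨e⟩ := hG
  have h1 : signedSum G = ∏ i, signedSum (cycleGraph (ns i)) :=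
    (signedSum_iso e).trans (signedSum_sigma _)
  have h2 : signedSum G = signedSum (cycleGraph n) := by
    have := congrArg (Polynomial.eval (-1)) hD
    rwa [domPoly_eval_neg_one, domPoly_eval_neg_one] at this
  have hcyc : ∀ m : ℕ, 1 ≤ m → signedSum (cycleGraph m) % 4 = 3 := by
    intro m hm
    obtain ⟨j, rfl⟩ : ∃ j, m = j + 1 := ⟨m - 1, by omega⟩
    rw [signedSum_cycle]
    exact cycSum_mod j
  have hfac : ∀ i, ((signedSum (cycleGraph (ns i)) : ℤ) : ZMod 4) = 3 :=
    fun i => int_mod_cast _ (hcyc (ns i) (hpos i))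
  have hprod : ((∏ i, signedSum (cycleGraph (ns i)) : ℤ) : ZMod 4) = 3 := by
    rw [← h1, h2]
    exact int_mod_cast _ (hcyc n (by omega))
  rw [Int.cast_prod] at hprod
  rw [Finset.prod_congr rfl (fun i _ => hfac i), Finset.prod_const, Finset.card_univ,
    Fintype.card_fin] at hprod
  rcases Nat.even_or_odd k with he | ho
  · exfalso
    obtain ⟨j, rfl⟩ := he
    rw [show j + j = 2 * j from by omega, pow_mul, show (3 : ZMod 4)^2 = 1 from rfl,
      one_pow] at hprod
    exact absurd hprod (by decide)
  · exact ho
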